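/- The proximal operator of φ_{ρ,ζ,η}(p,q) = ⟨p,ζ⟩ + ⟨q,η⟩ + ρ‖p − q‖₂ with step μ > 0 at the point (p,q) equals T_{μρ}(p − μζ, q − μη), where T_λ(a,b) = ((a+b)/2 + t_λ((a−b)/2), (a+b)/2 − t_λ((a−b)/2)) and t_λ(c) = ((‖c‖−λ)/‖c‖)c if ‖c‖ ≥ λ and 0 otherwise. -/

import Mathlib

open scoped RealInnerProductSpace

section Aux
variable {E : Type*} [NormedAddCommGroup E] [InnerProductSpace ℝ E]

lemma shrink_key (lam : ℝ) (hlam : 0 < lam) (c v w : E)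
    (hw : w = if lam ≤ ‖c‖ then ((‖c‖ - lam) / ‖c‖) • c else 0) :
    1/2 * ‖w - c‖^2 + lam * ‖w‖ + 1/2 * ‖v - w‖^2 ≤ 1/2 * ‖v - c‖^2 + lam * ‖v‖ := by
  have hvc : ‖v - c‖^2 = ‖v - w‖^2 + 2 * ⟪v - w, w - c⟫ + ‖w - c‖^2 := by
    have h := norm_add_sq_real (v - w) (w - c)
    rw [show v - w + (w - c) = v - c by abel] at h
    linarith
  have hcs := real_inner_le_norm v c
  by_cases h : lam ≤ ‖c‖
  · rw [if_pos h] at hw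
    have hc : (0:ℝ) < ‖c‖ := lt_of_lt_of_le hlam h
    set s : ℝ := (‖c‖ - lam) / ‖c‖ with hs
    have hs0 : 0 ≤ s := div_nonneg (by linarith) hc.le
    have hnw : ‖w‖ = ‖c‖ - lam := by
      rw [hw, norm_smul, Real.norm_eq_abs, abs_of_nonneg hs0, hs,
        div_mul_cancel₀ _ hc.ne']
    have hwc : w - c = (s - 1) • c := by
      rw [hw, sub_smul, one_smul]
    have hinner : ⟪v - w, w - c⟫ = (s - 1) * ⟪v, c⟫ - s * (s - 1) * ‖c‖^2 := by
      rw [hwc, hw, inner_sub_left, real_inner_smul_right, real_inner_smul_right,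
        real_inner_smul_left, real_inner_self_eq_norm_sq]
      ring
    have hs1 : s - 1 = -(lam / ‖c‖) := by
      field_simp [hs]
      rw [hs, sub_mul, div_mul_cancel₀ _ hc.ne']; ring
    have hkey : lam * ‖w‖ ≤ lam * ‖v‖ + ⟪v - w, w - c⟫ := by
      rw [hinner, hnw, hs1]
      have h1 : (lam / ‖c‖) * ⟪v, c⟫ ≤ (lam / ‖c‖) * (‖v‖ * ‖c‖) :=
        mul_le_mul_of_nonneg_left hcs (div_nonneg hlam.le hc.le)
      have h2 : (lam / ‖c‖) * (‖v‖ * ‖c‖) = lam * ‖v‖ := by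
        field_simp
      have h3 : s * (lam / ‖c‖) * ‖c‖^2 = lam * (‖c‖ - lam) := by
        rw [hs]; field_simp
      nlinarith [h1, h2, h3]
    linarith
  · rw [if_neg h] at hw
    push_neg at h
    subst hw
    simp only [norm_zero, zero_sub, norm_neg, sub_zero, mul_zero]
    have hvc2 : ‖v - c‖^2 = ‖v‖^2 - 2 * ⟪v, c⟫ + ‖c‖^2 := norm_sub_sq_real v c
    nlinarith [norm_nonneg v, hvc2, hcs, h]

lemma para (s t : E) :
    ‖s‖^2 + ‖t‖^2 = 2 * ‖(2:ℝ)⁻¹ • (s + t)‖^2 + 2 * ‖(2:ℝ)⁻¹ • (s - t)‖^2 := by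
  have h := parallelogram_law_with_norm ℝ ((2:ℝ)⁻¹ • (s + t)) ((2:ℝ)⁻¹ • (s - t))
  rw [show (2:ℝ)⁻¹ • (s + t) + (2:ℝ)⁻¹ • (s - t) = s by module,
    show (2:ℝ)⁻¹ • (s + t) - (2:ℝ)⁻¹ • (s - t) = t by module] at h
  linarith

lemma master (ρ μ : ℝ) (hρ : 0 < ρ) (hμ : 0 < μ) (p q ζ η x y a b ubar c w xs ys u v : E)
    (ha : a = p - μ • ζ) (hb : b = q - μ • η)
    (hubar : ubar = (2:ℝ)⁻¹ • (a + b)) (hc : c = (2:ℝ)⁻¹ • (a - b))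
    (hw : w = if μ * ρ ≤ ‖c‖ then ((‖c‖ - μ * ρ) / ‖c‖) • c else 0)
    (hxs : xs = ubar + w) (hys : ys = ubar - w)
    (hu : u = (2:ℝ)⁻¹ • (x + y)) (hv : v = (2:ℝ)⁻¹ • (x - y)) :
    (1/(2*μ) * ‖xs - p‖^2 + 1/(2*μ) * ‖ys - q‖^2 + (⟪xs, ζ⟫ + ⟪ys, η⟫ + ρ * ‖xs - ys‖))
      + 1/(2*μ) * (‖x - xs‖^2 + ‖y - ys‖^2)
    ≤ 1/(2*μ) * ‖x - p‖^2 + 1/(2*μ) * ‖y - q‖^2 + (⟪x, ζ⟫ + ⟪y, η⟫ + ρ * ‖x - y‖) := by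
  have hμ' : μ ≠ 0 := hμ.ne'
  -- complete the square in the linear terms
  have hA : ∀ z : E, 1/(2*μ) * ‖z - p‖^2 + ⟪z, ζ⟫
      = 1/(2*μ) * ‖z - a‖^2 + ⟪p, ζ⟫ - μ/2 * ‖ζ‖^2 := by
    intro z
    have h := norm_add_sq_real (z - p) (μ • ζ)
    rw [show z - p + μ • ζ = z - a by rw [ha]; abel, real_inner_smul_right,
      inner_sub_left, norm_smul, Real.norm_eq_abs, abs_of_pos hμ] at h
    rw [h]; field_simp; ring
  have hB : ∀ z : E, 1/(2*μ) * ‖z - q‖^2 + ⟪z, η⟫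
      = 1/(2*μ) * ‖z - b‖^2 + ⟪q, η⟫ - μ/2 * ‖η‖^2 := by
    intro z
    have h := norm_add_sq_real (z - q) (μ • η)
    rw [show z - q + μ • η = z - b by rw [hb]; abel, real_inner_smul_right,
      inner_sub_left, norm_smul, Real.norm_eq_abs, abs_of_pos hμ] at h
    rw [h]; field_simp; ring
  -- parallelogram decompositions
  have h1 : ‖x - a‖^2 + ‖y - b‖^2 = 2 * ‖u - ubar‖^2 + 2 * ‖v - c‖^2 := by
    have h := para (x - a) (y - b)
    rw [show (2:ℝ)⁻¹ • (x - a + (y - b)) = u - ubar by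
        rw [hu, hubar]; module,
      show (2:ℝ)⁻¹ • (x - a - (y - b)) = v - c by
        rw [hv, hc]; module] at h
    exact h
  have h2 : ‖xs - a‖^2 + ‖ys - b‖^2 = 2 * ‖w - c‖^2 := by
    have h := para (xs - a) (ys - b)
    rw [show (2:ℝ)⁻¹ • (xs - a + (ys - b)) = (0:E) by
        rw [hxs, hys, hubar]; module,
      show (2:ℝ)⁻¹ • (xs - a - (ys - b)) = w - c by
        rw [hxs, hys, hc]; module] at h
    simpa using h
  have h3 : ‖x - xs‖^2 + ‖y - ys‖^2 = 2 * ‖u - ubar‖^2 + 2 * ‖v - w‖^2 := by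
    have h := para (x - xs) (y - ys)
    rw [show (2:ℝ)⁻¹ • (x - xs + (y - ys)) = u - ubar by
        rw [hxs, hys, hu]; module,
      show (2:ℝ)⁻¹ • (x - xs - (y - ys)) = v - w by
        rw [hxs, hys, hv]; module] at h
    exact h
  -- norm relations
  have hxy : ‖x - y‖ = 2 * ‖v‖ := by
    rw [show x - y = (2:ℝ) • v by rw [hv]; module, norm_smul]
    norm_num
  have hxys : ‖xs - ys‖ = 2 * ‖w‖ := by
    rw [show xs - ys = (2:ℝ) • w by rw [hxs, hys]; module, norm_smul]
    norm_num
  -- shrinkage inequality, scaled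
  have hs := shrink_key (μ * ρ) (mul_pos hμ hρ) c v w hw
  have hsc : 1/μ * ‖w - c‖^2 + 2 * ρ * ‖w‖ + 1/μ * ‖v - w‖^2
      ≤ 1/μ * ‖v - c‖^2 + 2 * ρ * ‖v‖ := by
    have h := mul_le_mul_of_nonneg_left hs (by positivity : (0:ℝ) ≤ 2/μ)
    have e1 : (2/μ) * (1/2 * ‖w - c‖^2 + μ * ρ * ‖w‖ + 1/2 * ‖v - w‖^2)
        = 1/μ * ‖w - c‖^2 + 2 * ρ * ‖w‖ + 1/μ * ‖v - w‖^2 := by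
      field_simp
    have e2 : (2/μ) * (1/2 * ‖v - c‖^2 + μ * ρ * ‖v‖)
        = 1/μ * ‖v - c‖^2 + 2 * ρ * ‖v‖ := by
      field_simp
    rw [e1, e2] at h
    exact h
  -- put everything together
  have hAx := hA x; have hAxs := hA xs
  have hBy := hB y; have hBys := hB ys
  rw [hxy, hxys]
  have e3 : 1/(2*μ) * ‖x - a‖^2 + 1/(2*μ) * ‖y - b‖^2
      = 1/μ * ‖u - ubar‖^2 + 1/μ * ‖v - c‖^2 := by
    linear_combination (1/(2*μ)) * h1
  have e4 : 1/(2*μ) * ‖xs - a‖^2 + 1/(2*μ) * ‖ys - b‖^2 = 1/μ * ‖w - c‖^2 := by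
    linear_combination (1/(2*μ)) * h2
  have e5 : 1/(2*μ) * (‖x - xs‖^2 + ‖y - ys‖^2)
      = 1/μ * ‖u - ubar‖^2 + 1/μ * ‖v - w‖^2 := by
    linear_combination (1/(2*μ)) * h3
  linarith [hAx, hAxs, hBy, hBys, e3, e4, e5, hsc]

end Aux
/-- The proximal operator of the template function
`φ_{ρ,ζ,η}(p,q) = ⟨p,ζ⟩ + ⟨q,η⟩ + ρ‖p − q‖` with step `μ` at `(p,q)` is
`T_{μρ}(p − μζ, q − μη)`. -/
theorem prox_of_template_function {m : ℕ} (ρ μ : ℝ) (hρ : 0 < ρ) (hμ : 0 < μ)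
    (p q ζ η : EuclideanSpace ℝ (Fin m)) :
    let t : ℝ → EuclideanSpace ℝ (Fin m) → EuclideanSpace ℝ (Fin m) :=
      fun lam c => if lam ≤ ‖c‖ then ((‖c‖ - lam) / ‖c‖) • c else 0
    let T : ℝ → EuclideanSpace ℝ (Fin m) → EuclideanSpace ℝ (Fin m) →
        EuclideanSpace ℝ (Fin m) × EuclideanSpace ℝ (Fin m) :=
      fun lam a b => ((2 : ℝ)⁻¹ • (a + b) + t lam ((2 : ℝ)⁻¹ • (a - b)),
                      (2 : ℝ)⁻¹ • (a + b) - t lam ((2 : ℝ)⁻¹ • (a - b)))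
    let φ : EuclideanSpace ℝ (Fin m) → EuclideanSpace ℝ (Fin m) → ℝ :=
      fun x y => ⟪x, ζ⟫ + ⟪y, η⟫ + ρ * ‖x - y‖
    let f : EuclideanSpace ℝ (Fin m) × EuclideanSpace ℝ (Fin m) → ℝ :=
      fun xy => 1 / (2 * μ) * ‖xy.1 - p‖ ^ 2 + 1 / (2 * μ) * ‖xy.2 - q‖ ^ 2 + φ xy.1 xy.2
    (∀ xy, f (T (μ * ρ) (p - μ • ζ) (q - μ • η)) ≤ f xy) ∧
    ∀ xy, f xy = f (T (μ * ρ) (p - μ • ζ) (q - μ • η)) →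
      xy = T (μ * ρ) (p - μ • ζ) (q - μ • η) := by
  intro t T φ f
  set a : EuclideanSpace ℝ (Fin m) := p - μ • ζ with ha
  set b : EuclideanSpace ℝ (Fin m) := q - μ • η with hb
  set ubar : EuclideanSpace ℝ (Fin m) := (2:ℝ)⁻¹ • (a + b) with hubar
  set c : EuclideanSpace ℝ (Fin m) := (2:ℝ)⁻¹ • (a - b) with hc
  set w : EuclideanSpace ℝ (Fin m) :=
    if μ * ρ ≤ ‖c‖ then ((‖c‖ - μ * ρ) / ‖c‖) • c else 0 with hw
  have hT : T (μ * ρ) a b = (ubar + w, ubar - w) := rfl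
  have key : ∀ xy : EuclideanSpace ℝ (Fin m) × EuclideanSpace ℝ (Fin m),
      f (ubar + w, ubar - w)
        + 1/(2*μ) * (‖xy.1 - (ubar + w)‖^2 + ‖xy.2 - (ubar - w)‖^2)
        ≤ f xy := by
    intro xy
    have h := master ρ μ hρ hμ p q ζ η xy.1 xy.2 a b ubar c w (ubar + w) (ubar - w)
      ((2:ℝ)⁻¹ • (xy.1 + xy.2)) ((2:ℝ)⁻¹ • (xy.1 - xy.2)) ha hb hubar hc hw rfl rfl rfl rfl
    simp only [f, φ]
    exact h
  clear_value f T φ t w c ubar b a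
  constructor
  · intro xy
    rw [hT]
    have h := key xy
    have hnn : 0 ≤ 1/(2*μ) * (‖xy.1 - (ubar + w)‖^2 + ‖xy.2 - (ubar - w)‖^2) := by
      positivity
    linarith
  · intro xy hfeq
    rw [hT] at hfeq ⊢
    have h := key xy
    rw [hfeq] at h
    have hN : 1/(2*μ) * (‖xy.1 - (ubar + w)‖^2 + ‖xy.2 - (ubar - w)‖^2) ≤ 0 := by
      linarith
    have h2μ : (0:ℝ) < 1/(2*μ) := by positivity
    have hS : ‖xy.1 - (ubar + w)‖^2 + ‖xy.2 - (ubar - w)‖^2 ≤ 0 := by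
      by_contra hcon
      push_neg at hcon
      exact absurd hN (not_le.mpr (mul_pos h2μ hcon))
    have hn1 := sq_nonneg ‖xy.1 - (ubar + w)‖
    have hn2 := sq_nonneg ‖xy.2 - (ubar - w)‖
    have h1 : xy.1 = ubar + w := by
      have he : ‖xy.1 - (ubar + w)‖^2 = 0 := le_antisymm (by linarith) hn1
      have := (pow_eq_zero_iff two_ne_zero).mp he
      rwa [norm_eq_zero, sub_eq_zero] at this
    have h2 : xy.2 = ubar - w := by
      have he : ‖xy.2 - (ubar - w)‖^2 = 0 := le_antisymm (by linarith) hn2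
      have := (pow_eq_zero_iff two_ne_zero).mp he
      rwa [norm_eq_zero, sub_eq_zero] at this
    exact Prod.ext h1 h2
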